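/- Let G be a connected locally finite simple graph and let xy be an edge of G with d(x) = 3 and d(y) = 4. Suppose x and y have exactly one common neighbor u₁, and y has a neighbor u₂ ∉ N[x] with u₁u₂ ∈ E(G). Then κ(x,y) ≥ 1/12. -/

import Mathlib

open scoped BigOperators

namespace LLY

variable {V : Type*}

/-- Degree of a vertex (as `Nat.card` of its neighbor set; agrees with the usual
degree in a locally finite graph). -/
noncomputable def deg (G : SimpleGraph V) (u : V) : ℕ := Nat.card (G.neighborSet u)

/-- `G` is locally finite. -/
def LocFin (G : SimpleGraph V) : Prop := ∀ v : V, (G.neighborSet v).Finite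

/-- `f` is 1-Lipschitz with respect to the graph distance of `G`. -/
def Lip1 (G : SimpleGraph V) (f : V → ℝ) : Prop :=
  ∀ a b : V, |f a - f b| ≤ (G.dist a b : ℝ)

/-- The (normalized) graph Laplacian `Δf(u) = (1/d(u)) ∑_{v ∈ N(u)} (f v - f u)`. -/
noncomputable def lap (G : SimpleGraph V) (f : V → ℝ) (u : V) : ℝ :=
  (1 / (deg G u : ℝ)) * ∑ᶠ v ∈ G.neighborSet u, (f v - f u)

/-- The gradient `∇_{xy} f = (f x - f y)/d(x,y)`. -/
noncomputable def grad (G : SimpleGraph V) (f : V → ℝ) (x y : V) : ℝ :=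
  (f x - f y) / (G.dist x y : ℝ)

/-- Lin–Lu–Yau curvature of the pair `{x,y}` (limit-free Münch–Wojciechowski form):
`κ(x,y) = inf { ∇_{xy} Δf : f 1-Lipschitz, ∇_{yx} f = 1 }`. -/
noncomputable def kappa (G : SimpleGraph V) (x y : V) : ℝ :=
  sInf {k : ℝ | ∃ f : V → ℝ, Lip1 G f ∧ grad G f y x = 1 ∧ k = grad G (lap G f) x y}

end LLY


lemma insert_of_ncard_succ {V : Type*} {s t : Set V} (hsub : t ⊆ s) (ht : t.Finite)
    (h : s.ncard = t.ncard + 1) : ∃ a, a ∉ t ∧ s = insert a t := by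
  have h1 : (s \ t).ncard = 1 := by rw [Set.ncard_diff hsub ht, h]; omega
  obtain ⟨a, ha⟩ := Set.ncard_eq_one.mp h1
  have hamem : a ∈ s \ t := by rw [ha]; exact rfl
  refine ⟨a, hamem.2, ?_⟩
  rw [← Set.diff_union_of_subset hsub, ha, Set.singleton_union]

lemma finsum_triple {V : Type*} (g : V → ℝ) (a b c : V) (hab : a ≠ b) (hac : a ≠ c)
    (hbc : b ≠ c) : ∑ᶠ v ∈ ({a, b, c} : Set V), g v = g a + g b + g c := by
  classical
  have h : ({a, b, c} : Set V) = (↑({a, b, c} : Finset V) : Set V) := by simp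
  rw [h, finsum_mem_coe_finset,
    Finset.sum_insert (by simp [hab, hac]), Finset.sum_insert (by simp [hbc]),
    Finset.sum_singleton]
  ring

lemma finsum_quad {V : Type*} (g : V → ℝ) (a b c d : V) (hab : a ≠ b) (hac : a ≠ c)
    (had : a ≠ d) (hbc : b ≠ c) (hbd : b ≠ d) (hcd : c ≠ d) :
    ∑ᶠ v ∈ ({a, b, c, d} : Set V), g v = g a + g b + g c + g d := by
  classical
  have h : ({a, b, c, d} : Set V) = (↑({a, b, c, d} : Finset V) : Set V) := by simp
  rw [h, finsum_mem_coe_finset,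
    Finset.sum_insert (by simp [hab, hac, had]), Finset.sum_insert (by simp [hbc, hbd]),
    Finset.sum_insert (by simp [hcd]), Finset.sum_singleton]
  ring

open LLY in
/-- If `xy` is an edge with `d(x) = 3`, `d(y) = 4`, `x` and `y` have
exactly one common neighbor `u₁`, and `y` has a neighbor `u₂ ∉ N[x]` with `u₁u₂ ∈ E(G)`,
then `κ(x,y) ≥ 1/12`. -/
theorem curv_ge_twelfth {V : Type*} (G : SimpleGraph V)
    (hconn : G.Connected) (hfin : LocFin G) (x y u₁ u₂ : V) (hxy : G.Adj x y)
    (hdx : deg G x = 3) (hdy : deg G y = 4)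
    (hu₁ : G.neighborSet x ∩ G.neighborSet y = {u₁})
    (hu₂ : G.Adj y u₂ ∧ u₂ ∉ G.neighborSet x ∪ {x} ∧ G.Adj u₁ u₂) :
    kappa G x y ≥ 1 / 12 := by
  obtain ⟨hyu₂, hu₂x, hu₁u₂⟩ := hu₂
  -- basic adjacency facts
  have hu₁mem : u₁ ∈ G.neighborSet x ∩ G.neighborSet y := by rw [hu₁]; exact rfl
  have hxu₁ : G.Adj x u₁ := hu₁mem.1
  have hyu₁ : G.Adj y u₁ := hu₁mem.2
  -- distances
  have dxy : G.dist x y = 1 := SimpleGraph.dist_eq_one_iff_adj.mpr hxy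
  have dyx : G.dist y x = 1 := SimpleGraph.dist_eq_one_iff_adj.mpr hxy.symm
  have dxu₁ : G.dist x u₁ = 1 := SimpleGraph.dist_eq_one_iff_adj.mpr hxu₁
  have du₁u₂ : G.dist u₁ u₂ = 1 := SimpleGraph.dist_eq_one_iff_adj.mpr hu₁u₂
  -- enumerate the neighborhoods
  have hcardx : (G.neighborSet x).ncard = 3 := by
    rw [← Nat.card_coe_set_eq]; exact hdx
  have hcardy : (G.neighborSet y).ncard = 4 := by
    rw [← Nat.card_coe_set_eq]; exact hdy
  have hyne : y ≠ u₁ := hyu₁.ne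
  have hxne : x ≠ u₁ := hxu₁.ne
  have hxu₂ : x ≠ u₂ := by
    intro h; exact hu₂x (Or.inr (by simp [h]))
  have hu₁u₂ne : u₁ ≠ u₂ := hu₁u₂.ne
  obtain ⟨a, haT, hNx⟩ : ∃ a, a ∉ ({y, u₁} : Set V) ∧
      G.neighborSet x = insert a {y, u₁} := by
    refine insert_of_ncard_succ ?_ (Set.toFinite _) ?_
    · rintro z (rfl | rfl)
      · exact hxy
      · exact hxu₁
    · rw [hcardx, Set.ncard_pair hyne]
  obtain ⟨b, hbT, hNy⟩ : ∃ b, b ∉ ({x, u₁, u₂} : Set V) ∧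
      G.neighborSet y = insert b {x, u₁, u₂} := by
    refine insert_of_ncard_succ ?_ (Set.toFinite _) ?_
    · rintro z (rfl | rfl | rfl)
      · exact hxy.symm
      · exact hyu₁
      · exact hyu₂
    · rw [hcardy, Set.ncard_insert_of_notMem (by simp [hxne, hxu₂]) (Set.toFinite _),
        Set.ncard_pair hu₁u₂ne]
  have hay : a ≠ y := fun h => haT (by simp [h])
  have hau₁ : a ≠ u₁ := fun h => haT (by simp [h])
  have hbx : b ≠ x := fun h => hbT (by simp [h])
  have hbu₁ : b ≠ u₁ := fun h => hbT (by simp [h])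
  have hbu₂ : b ≠ u₂ := fun h => hbT (by simp [h])
  have hxa : G.Adj x a := by
    have : a ∈ G.neighborSet x := by rw [hNx]; exact Set.mem_insert _ _
    exact this
  have hyb : G.Adj y b := by
    have : b ∈ G.neighborSet y := by rw [hNy]; exact Set.mem_insert _ _
    exact this
  have dxa : G.dist x a = 1 := SimpleGraph.dist_eq_one_iff_adj.mpr hxa
  have dyb : G.dist y b = 1 := SimpleGraph.dist_eq_one_iff_adj.mpr hyb
  have dxb : G.dist x b ≤ 2 := by
    calc G.dist x b ≤ G.dist x y + G.dist y b := hconn.dist_triangle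
    _ = 2 := by rw [dxy, dyb]
  -- lower bound for every element of the set
  refine le_csInf ?_ ?_
  · -- nonempty: f = dist from x
    refine ⟨grad G (lap G (fun v => (G.dist x v : ℝ))) x y,
      fun v => (G.dist x v : ℝ), ?_, ?_, rfl⟩
    · intro p q
      rw [abs_sub_le_iff]
      constructor
      · have h1 : G.dist x p ≤ G.dist x q + G.dist q p := hconn.dist_triangle
        have h2 : G.dist q p = G.dist p q := SimpleGraph.dist_comm ..
        rw [h2] at h1
        have : (G.dist x p : ℝ) ≤ (G.dist x q : ℝ) + (G.dist p q : ℝ) := by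
          exact_mod_cast h1
        linarith
      · have h1 : G.dist x q ≤ G.dist x p + G.dist p q := hconn.dist_triangle
        have : (G.dist x q : ℝ) ≤ (G.dist x p : ℝ) + (G.dist p q : ℝ) := by
          exact_mod_cast h1
        linarith
    · rw [grad, dyx, SimpleGraph.dist_self, dxy]
      norm_num
  · rintro k ⟨f, hL, hg, hk⟩
    -- grad condition gives f y = f x + 1
    have hfy : f y = f x + 1 := by
      rw [grad, dyx] at hg
      have : f y - f x = 1 := by
        field_simp at hg; push_cast at hg; linarith
      linarith
    -- Lipschitz bounds
    have e1 : |f u₁ - f x| ≤ 1 := by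
      have h := hL u₁ x
      rwa [SimpleGraph.dist_comm, dxu₁, Nat.cast_one] at h
    have e2 : |f a - f x| ≤ 1 := by
      have h := hL a x
      rwa [SimpleGraph.dist_comm, dxa, Nat.cast_one] at h
    have e3 : |f u₂ - f u₁| ≤ 1 := by
      have h := hL u₂ u₁
      rwa [SimpleGraph.dist_comm, du₁u₂, Nat.cast_one] at h
    have e4 : |f b - f x| ≤ 2 := by
      have h := hL b x
      have h2 : (G.dist b x : ℝ) ≤ 2 := by
        rw [SimpleGraph.dist_comm]; exact_mod_cast dxb
      linarith [h, h2]
    rw [abs_le] at e1 e2 e3 e4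
    -- compute the Laplacians
    have hlx : lap G f x = (1 / 3) * ((f a - f x) + (f y - f x) + (f u₁ - f x)) := by
      rw [lap, hdx, hNx, finsum_triple _ _ _ _ hay hau₁ hyne]
      norm_num
    have hly : lap G f y = (1 / 4) * ((f b - f y) + (f x - f y) + (f u₁ - f y)
        + (f u₂ - f y)) := by
      rw [lap, hdy, hNy, finsum_quad _ _ _ _ _ hbx hbu₁ hbu₂ hxne hxu₂ hu₁u₂ne]
      norm_num
    have hk2 : k = lap G f x - lap G f y := by
      rw [hk, grad, dxy, Nat.cast_one, div_one]
    rw [hk2, hlx, hly, hfy]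
    linarith [e1.1, e1.2, e2.1, e2.2, e3.1, e3.2, e4.1, e4.2]
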